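/- For rotor configurations ρ and ρ' on G, the following are equivalent: (a) σρ = σρ' for some particle configuration σ; (b) σρ = σρ' for all recurrent particle configurations σ ∈ S(G/T); (c) eρ = eρ', where e is the identity element of the sandpile group S(G/T); (d) σρ = σρ' for all particle configurations σ with σ(v) ≥ e(v) for every v ∈ V0. -/

import Mathlib

open Function

/-- A strongly connected finite directed multigraph (self-loops and multiple arcs
allowed), given by source and head maps `src, head : E → V`, together with a nonempty
target set `T` and a rotor mechanism at each vertex: `next` is a cyclic ordering of
the arcs emanating from each vertex (it permutes the arcs, preserves the source, and
acts transitively on the arcs emanating from any fixed vertex). -/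
structure RotorSystem (V E : Type) [Fintype V] [DecidableEq V] [Fintype E]
    [DecidableEq E] where
  src : E → V
  head : E → V
  T : Finset V
  T_nonempty : T.Nonempty
  strongly_connected : ∀ v w : V,
    Relation.ReflTransGen (fun a b => ∃ e : E, src e = a ∧ head e = b) v w
  next : E → E
  next_src : ∀ e, src (next e) = src e
  next_bijective : Function.Bijective next
  next_cyclic : ∀ e e', src e = src e' → ∃ k : ℕ, next^[k] e = e'

namespace RotorSystem

variable {V E : Type} [Fintype V] [DecidableEq V] [Fintype E] [DecidableEq E]

/-- The set `V₀ = V - T` of non-target vertices. -/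
abbrev V0 (S : RotorSystem V E) : Type := {v : V // v ∉ S.T}

/-- A rotor configuration: each non-target vertex carries an arc emanating from it. -/
abbrev RConf (S : RotorSystem V E) : Type :=
  {ρ : S.V0 → E // ∀ v : S.V0, S.src (ρ v) = v.1}

/-- A particle configuration: a number of particles at each non-target vertex. -/
abbrev PConf (S : RotorSystem V E) : Type := S.V0 → ℕ

variable (S : RotorSystem V E)

/-- One step of a single particle's rotor walk: at a non-target vertex the rotor is
first progressed and the particle then moves along the new rotor arc; target vertices
absorb the particle. -/
def step (p : V × S.RConf) : V × S.RConf :=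
  if h : p.1 ∈ S.T then p
  else
    (S.head (S.next (p.2.1 ⟨p.1, h⟩)),
      ⟨Function.update p.2.1 ⟨p.1, h⟩ (S.next (p.2.1 ⟨p.1, h⟩)), by
        intro w
        rcases eq_or_ne w ⟨p.1, h⟩ with rfl | hw
        · rw [Function.update_self, S.next_src]
          exact p.2.2 ⟨p.1, h⟩
        · rw [Function.update_of_ne hw]
          exact p.2.2 w⟩)

open Classical in
/-- Route a single particle from `x` by rotor walk until it first reaches the target
set; the result is the pair (final position, final rotor configuration). -/
noncomputable def route (x : V) (ρ : S.RConf) : V × S.RConf :=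
  if h : ∃ n, (S.step^[n] (x, ρ)).1 ∈ S.T then S.step^[Nat.find h] (x, ρ) else (x, ρ)

/-- `t_x(ρ)`: the target vertex reached by a single particle started at `x` with
initial rotor configuration `ρ`. -/
noncomputable def tgt (x : V) (ρ : S.RConf) : V := (S.route x ρ).1

/-- The particle addition operator `E_v`: add one particle at `v` and route it to the
target set. -/
noncomputable def addAt (v : S.V0) (ρ : S.RConf) : S.RConf := (S.route v.1 ρ).2

/-- The action `σρ` of a particle configuration on a rotor configuration: place
`σ v` particles at each vertex `v` and route them all to the target set. -/
noncomputable def act (σ : S.PConf) (ρ : S.RConf) : S.RConf :=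
  (Finset.univ : Finset S.V0).toList.foldr (fun v r => (S.addAt v)^[σ v] r) ρ

/-- Equivalence of rotor configurations: `ρ ≡ ρ'` iff `σρ = σρ'` for some particle
configuration `σ`. -/
def REquiv (ρ ρ' : S.RConf) : Prop := ∃ σ : S.PConf, S.act σ ρ = S.act σ ρ'

/-- The outdegree `d(v)`. -/
def outdeg (v : V) : ℕ := (Finset.univ.filter fun e : E => S.src e = v).card

/-- The number `d(v,w)` of arcs from `v` to `w`. -/
def numArcs (v w : V) : ℕ :=
  (Finset.univ.filter fun e : E => S.src e = v ∧ S.head e = w).card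

/-- A particle configuration is stable if every non-target vertex holds at most
`d(v) - 1` particles. -/
def IsStable (σ : S.PConf) : Prop := ∀ v : S.V0, σ v < S.outdeg v.1

/-- Parallel toppling: every unstable vertex topples once, sending one particle along
each arc emanating from it. -/
def toppleStep (σ : S.PConf) : S.PConf := fun v =>
  (if S.outdeg v.1 ≤ σ v then σ v - S.outdeg v.1 else σ v) +
    ∑ w : S.V0, (if S.outdeg w.1 ≤ σ w then S.numArcs w.1 v.1 else 0)

open Classical in
/-- The stabilization `σ°` of a particle configuration. -/
noncomputable def stabilize (σ : S.PConf) : S.PConf :=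
  if h : ∃ n, S.IsStable (S.toppleStep^[n] σ) then S.toppleStep^[Nat.find h] σ else σ

/-- A stable particle configuration is recurrent if it is reachable (by adding
particles and stabilizing) from every particle configuration.  The recurrent
configurations form the sandpile group `S(G/T)` under addition-then-stabilization. -/
def IsRecurrent (τ : S.PConf) : Prop :=
  S.IsStable τ ∧ ∀ σ : S.PConf, ∃ τ' : S.PConf, τ = S.stabilize (τ' + σ)

/-- `e` is the identity element of the sandpile group `S(G/T)`. -/
def IsSandpileIdentity (e : S.PConf) : Prop :=
  S.IsRecurrent e ∧ ∀ τ : S.PConf, S.IsRecurrent τ → S.stabilize (e + τ) = τ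

/-- The rotor arcs of `ρ`, as a relation on vertices. -/
def rotorRel (ρ : S.RConf) (a b : V) : Prop :=
  ∃ h : a ∉ S.T, S.head (ρ.1 ⟨a, h⟩) = b

/-- A rotor configuration is acyclic if its rotor arcs contain no directed cycle. -/
def IsAcyclicConf (ρ : S.RConf) : Prop :=
  ∀ v : V, ¬ Relation.TransGen (S.rotorRel ρ) v v

/-- `ρ'` is obtained from `ρ` by pushing a cycle: there are distinct non-target
vertices `v_0, …, v_{r-1}` with the rotor arc of `v_j` pointing to `v_{j+1}`
(cyclically); each such rotor is regressed one step, other rotors are unchanged. -/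
def IsCyclePush (ρ ρ' : S.RConf) : Prop :=
  ∃ r : ℕ, 0 < r ∧ ∃ f : ZMod r → S.V0, Function.Injective f ∧
    (∀ j : ZMod r, S.head (ρ.1 (f j)) = (f (j + 1)).1) ∧
    (∀ j : ZMod r, S.next (ρ'.1 (f j)) = ρ.1 (f j)) ∧
    (∀ v : S.V0, v ∉ Set.range f → ρ'.1 v = ρ.1 v)

end RotorSystem

namespace RotorSystem

variable {V E : Type} [Fintype V] [DecidableEq V] [Fintype E] [DecidableEq E]
variable (S : RotorSystem V E)

/-! ### Orbit combinatorics of the rotor mechanism -/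

lemma next_iter_src (k : ℕ) (e : E) : S.src (S.next^[k] e) = S.src e := by
  induction k with
  | zero => rfl
  | succ n ih => rw [Function.iterate_succ_apply', S.next_src, ih]

lemma period_of_collide (e₀ : E) {i j : ℕ} (hlt : i < j)
    (hEq : S.next^[i] e₀ = S.next^[j] e₀) : S.next^[j - i] e₀ = e₀ := by
  have hinj : Function.Injective (S.next^[i]) := S.next_bijective.injective.iterate _
  apply hinj
  rw [← Function.iterate_add_apply]
  have h : i + (j - i) = j := by omega
  rw [h]
  exact hEq.symm

lemma exists_pos_period (e₀ : E) : ∃ p, 0 < p ∧ S.next^[p] e₀ = e₀ := by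
  have h : ¬ Function.Injective (fun k : Fin (Fintype.card E + 1) => S.next^[(k : ℕ)] e₀) := by
    intro hinj
    have := Fintype.card_le_of_injective _ hinj
    simp at this
  rw [Function.not_injective_iff] at h
  obtain ⟨i, j, hij, hne⟩ := h
  rcases Nat.lt_or_ge (i : ℕ) (j : ℕ) with hlt | hge
  · exact ⟨(j : ℕ) - (i : ℕ), by omega, S.period_of_collide e₀ hlt hij⟩
  · have hlt : (j : ℕ) < (i : ℕ) := by
      rcases Nat.lt_or_ge (j : ℕ) (i : ℕ) with h' | h'
      · exact h'
      · exact absurd (Fin.ext (by omega)) hne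
    exact ⟨(i : ℕ) - (j : ℕ), by omega, S.period_of_collide e₀ hlt hij.symm⟩

lemma iterate_period (e₀ : E) {p : ℕ} (hp : S.next^[p] e₀ = e₀) (q : ℕ) :
    S.next^[p * q] e₀ = e₀ := by
  induction q with
  | zero => simp
  | succ n ih => rw [Nat.mul_succ, Function.iterate_add_apply, hp, ih]

lemma iterate_mod (e₀ : E) {p : ℕ} (hppos : 0 < p) (hp : S.next^[p] e₀ = e₀) (k : ℕ) :
    S.next^[k] e₀ = S.next^[k % p] e₀ := by
  have h2 : S.next^[p * (k / p)] e₀ = e₀ := S.iterate_period e₀ hp _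
  have h3 : k = k % p + p * (k / p) := by
    have := Nat.mod_add_div k p
    omega
  conv_lhs => rw [h3]
  rw [Function.iterate_add_apply, h2]

/-- package: minimal positive period equals outdegree, with full orbit facts. -/
lemma orbit_facts (e₀ : E) :
    S.next^[S.outdeg (S.src e₀)] e₀ = e₀ ∧
    (Finset.range (S.outdeg (S.src e₀))).image (fun k => S.next^[k] e₀) =
      Finset.univ.filter (fun e => S.src e = S.src e₀) := by
  classical
  have H := S.exists_pos_period e₀
  obtain ⟨hppos, hper⟩ : 0 < Nat.find H ∧ S.next^[Nat.find H] e₀ = e₀ := Nat.find_spec H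
  set p := Nat.find H with hpdef
  have hinj : Set.InjOn (fun k => S.next^[k] e₀) (Finset.range p) := by
    intro i hi j hj hEq
    simp only [Finset.coe_range, Set.mem_Iio] at hi hj
    by_contra hne
    have key : ∀ i j : ℕ, i < j → j < p → S.next^[i] e₀ = S.next^[j] e₀ → False := by
      intro i j hlt hjp hEq
      have := S.period_of_collide e₀ hlt hEq
      have hle : Nat.find H ≤ j - i := Nat.find_le ⟨by omega, this⟩
      omega
    rcases Nat.lt_or_ge i j with hlt | hge
    · exact key i j hlt hj hEq
    · exact key j i (by omega) hi hEq.symm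
  have himg : (Finset.range p).image (fun k => S.next^[k] e₀) =
      Finset.univ.filter (fun e => S.src e = S.src e₀) := by
    apply Finset.Subset.antisymm
    · intro e he
      simp only [Finset.mem_image, Finset.mem_range] at he
      obtain ⟨k, _, rfl⟩ := he
      simp [S.next_iter_src]
    · intro e he
      simp only [Finset.mem_filter, Finset.mem_univ, true_and] at he
      obtain ⟨k, hk⟩ := S.next_cyclic e₀ e he.symm
      simp only [Finset.mem_image, Finset.mem_range]
      exact ⟨k % p, Nat.mod_lt _ hppos, by rw [← S.iterate_mod e₀ hppos hper]; exact hk⟩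
  have hcard : p = S.outdeg (S.src e₀) := by
    have h1 := Finset.card_image_of_injOn hinj
    rw [himg] at h1
    rw [Finset.card_range] at h1
    rw [outdeg]
    exact h1.symm
  rw [← hcard]
  exact ⟨hper, himg⟩

lemma next_iter_outdeg (e₀ : E) : S.next^[S.outdeg (S.src e₀)] e₀ = e₀ :=
  (S.orbit_facts e₀).1

lemma next_iter_hits (e₀ e : E) (h : S.src e = S.src e₀) (K : ℕ) :
    ∃ k, K ≤ k ∧ S.next^[k] e₀ = e := by
  have himg := (S.orbit_facts e₀).2
  have he : e ∈ Finset.univ.filter (fun e => S.src e = S.src e₀) := by simp [h]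
  rw [← himg] at he
  simp only [Finset.mem_image, Finset.mem_range] at he
  obtain ⟨k₀, hk₀, hk₀e⟩ := he
  have hdpos : 0 < S.outdeg (S.src e₀) := by omega
  refine ⟨k₀ + S.outdeg (S.src e₀) * K, by nlinarith, ?_⟩
  rw [Function.iterate_add_apply, S.iterate_period e₀ (S.next_iter_outdeg e₀) K]
  exact hk₀e

end RotorSystem
namespace RotorSystem

variable {V E : Type} [Fintype V] [DecidableEq V] [Fintype E] [DecidableEq E]
variable (S : RotorSystem V E)

/-! ### The multi-particle firing system -/

/-- Fire one particle sitting at `v`: progress the rotor and move the particle. -/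
noncomputable def fireAt (v : S.V0) (s : (V → ℕ) × S.RConf) : (V → ℕ) × S.RConf :=
  (fun x => (if x = v.1 then s.1 x - 1 else s.1 x) +
      (if x = S.head (S.next (s.2.1 v)) then 1 else 0),
   ⟨Function.update s.2.1 v (S.next (s.2.1 v)), by
      intro w
      rcases eq_or_ne w v with rfl | hw
      · rw [Function.update_self, S.next_src]; exact s.2.2 w
      · rw [Function.update_of_ne hw]; exact s.2.2 w⟩)

def FireR (s t : (V → ℕ) × S.RConf) : Prop := ∃ v : S.V0, s.1 v.1 ≠ 0 ∧ t = S.fireAt v s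

def ReachesR : ((V → ℕ) × S.RConf) → ((V → ℕ) × S.RConf) → Prop :=
  Relation.ReflTransGen S.FireR

def StableS (s : (V → ℕ) × S.RConf) : Prop := ∀ v : S.V0, s.1 v.1 = 0

lemma fireAt_comm (v w : S.V0) (hvw : v ≠ w) (s : (V → ℕ) × S.RConf)
    (hv : s.1 v.1 ≠ 0) (hw : s.1 w.1 ≠ 0) :
    S.fireAt v (S.fireAt w s) = S.fireAt w (S.fireAt v s) := by
  have hvw1 : v.1 ≠ w.1 := fun h => hvw (Subtype.ext h)
  have h1 : Function.update s.2.1 w (S.next (s.2.1 w)) v = s.2.1 v :=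
    Function.update_of_ne hvw _ _
  have h2 : Function.update s.2.1 v (S.next (s.2.1 v)) w = s.2.1 w :=
    Function.update_of_ne (Ne.symm hvw) _ _
  refine Prod.ext ?_ ?_
  · funext x
    simp only [fireAt, h1, h2]
    rcases eq_or_ne x v.1 with rfl | hxv
    · simp only [if_neg hvw1, if_pos rfl]
      split_ifs <;> omega
    · rcases eq_or_ne x w.1 with rfl | hxw
      · simp only [if_neg (Ne.symm hvw1), if_pos rfl]
        split_ifs <;> omega
      · simp only [if_neg hxv, if_neg hxw]
        split_ifs <;> omega
  · apply Subtype.ext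
    simp only [fireAt, h1, h2]
    exact (Function.update_comm hvw (S.next (s.2.1 v)) (S.next (s.2.1 w)) s.2.1).symm

lemma fireAt_count_other (v : S.V0) (s : (V → ℕ) × S.RConf) (x : V) (hx : x ≠ v.1) :
    (S.fireAt v s).1 x = s.1 x + (if x = S.head (S.next (s.2.1 v)) then 1 else 0) := by
  simp [fireAt, hx]

lemma diamond {s t1 t2 : (V → ℕ) × S.RConf} (h1 : S.FireR s t1) (h2 : S.FireR s t2) :
    t1 = t2 ∨ ∃ u, S.FireR t1 u ∧ S.FireR t2 u := by
  obtain ⟨v, hv, rfl⟩ := h1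
  obtain ⟨w, hw, rfl⟩ := h2
  rcases eq_or_ne v w with rfl | hvw
  · exact Or.inl rfl
  · refine Or.inr ⟨S.fireAt w (S.fireAt v s), ⟨w, ?_, rfl⟩, ⟨v, ?_, ?_⟩⟩
    · rw [S.fireAt_count_other v s w.1 (fun h => hvw (Subtype.ext h.symm))]
      split_ifs <;> omega
    · rw [S.fireAt_count_other w s v.1 (fun h => hvw (Subtype.ext h))]
      split_ifs <;> omega
    · exact (S.fireAt_comm v w hvw s hv hw).symm

lemma not_fire_of_stable {s t : (V → ℕ) × S.RConf} (hs : S.StableS s) (h : S.FireR s t) :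
    False := by
  obtain ⟨v, hv, _⟩ := h
  exact hv (hs v)

lemma reaches_of_fire_of_stable {s t u : (V → ℕ) × S.RConf} (hst : S.FireR s t)
    (hsu : S.ReachesR s u) (hu : S.StableS u) : S.ReachesR t u := by
  induction hsu using Relation.ReflTransGen.head_induction_on generalizing t with
  | refl => exact absurd hst (fun h => S.not_fire_of_stable hu h)
  | head hab hbu ih =>
    rename_i a b
    rcases S.diamond hst hab with rfl | ⟨c, htc, hbc⟩
    · exact hbu
    · exact Relation.ReflTransGen.head htc (ih hbc)

lemma stable_reaches_eq {s u : (V → ℕ) × S.RConf} (hs : S.StableS s)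
    (h : S.ReachesR s u) : u = s := by
  induction h using Relation.ReflTransGen.head_induction_on with
  | refl => rfl
  | head hab _ _ => exact absurd hab (fun h => S.not_fire_of_stable hs h)

lemma reaches_unique {s u1 u2 : (V → ℕ) × S.RConf} (h1 : S.ReachesR s u1)
    (hu1 : S.StableS u1) (h2 : S.ReachesR s u2) (hu2 : S.StableS u2) : u1 = u2 := by
  induction h2 using Relation.ReflTransGen.head_induction_on with
  | refl => exact S.stable_reaches_eq hu2 h1
  | head hab hbu ih => exact ih (S.reaches_of_fire_of_stable hab h1 hu1)

end RotorSystem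
namespace RotorSystem

variable {V E : Type} [Fintype V] [DecidableEq V] [Fintype E] [DecidableEq E]
variable (S : RotorSystem V E)

/-! ### Single-particle walk as firing -/

lemma step_of_mem {p : V × S.RConf} (h : p.1 ∈ S.T) : S.step p = p := by
  rw [step, dif_pos h]

lemma step_fst {p : V × S.RConf} (h : p.1 ∉ S.T) :
    (S.step p).1 = S.head (S.next (p.2.1 ⟨p.1, h⟩)) := by
  rw [step, dif_neg h]

lemma step_snd {p : V × S.RConf} (h : p.1 ∉ S.T) :
    (S.step p).2.1 = Function.update p.2.1 ⟨p.1, h⟩ (S.next (p.2.1 ⟨p.1, h⟩)) := by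
  rw [step, dif_neg h]

lemma reaches_step_iter (n : ℕ) (x : V) (ρ : S.RConf) (m : V → ℕ) :
    S.ReachesR (fun y => m y + if y = x then 1 else 0, ρ)
      (fun y => m y + if y = (S.step^[n] (x, ρ)).1 then 1 else 0, (S.step^[n] (x, ρ)).2) := by
  induction n with
  | zero => exact Relation.ReflTransGen.refl
  | succ n ih =>
    rw [Function.iterate_succ_apply']
    set p := S.step^[n] (x, ρ) with hp
    by_cases h : p.1 ∈ S.T
    · rw [S.step_of_mem h]
      exact ih
    · refine Relation.ReflTransGen.tail ih ⟨⟨p.1, h⟩, by simp, ?_⟩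
      refine Prod.ext ?_ ?_
      · funext y
        simp only [fireAt]
        rw [S.step_fst h]
        rcases eq_or_ne y p.1 with rfl | hy
        · simp only [if_pos rfl]
          split_ifs <;> omega
        · simp only [if_neg hy]
          split_ifs <;> omega
      · apply Subtype.ext
        rw [S.step_snd h]
        rfl

/-! ### Termination of the single-particle walk -/

open Classical in
lemma exists_step_mem (x : V) (ρ : S.RConf) : ∃ n, (S.step^[n] (x, ρ)).1 ∈ S.T := by
  by_contra hno
  push_neg at hno
  set pos : ℕ → V := fun n => (S.step^[n] (x, ρ)).1 with hposdef
  set cfg : ℕ → S.RConf := fun n => (S.step^[n] (x, ρ)).2 with hcfgdef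
  have hnotT : ∀ n, pos n ∉ S.T := hno
  have hstep : ∀ n, pos (n + 1) = S.head (S.next ((cfg n).1 ⟨pos n, hnotT n⟩)) ∧
      (cfg (n + 1)).1 = Function.update (cfg n).1 ⟨pos n, hnotT n⟩
        (S.next ((cfg n).1 ⟨pos n, hnotT n⟩)) := by
    intro n
    have h1 : S.step^[n + 1] (x, ρ) = S.step (S.step^[n] (x, ρ)) :=
      Function.iterate_succ_apply' _ _ _
    constructor
    · show (S.step^[n+1] (x, ρ)).1 = _
      rw [h1, S.step_fst (hnotT n)]
    · show (S.step^[n+1] (x, ρ)).2.1 = _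
      rw [h1, S.step_snd (hnotT n)]
  -- rotor evolution at a fixed non-target vertex
  have rotor_evol : ∀ (z : S.V0) (n : ℕ),
      (cfg n).1 z = S.next^[Nat.count (fun i => pos i = z.1) n] (ρ.1 z) := by
    intro z n
    induction n with
    | zero =>
      simp only [Nat.count_zero, Function.iterate_zero, id]
      rfl
    | succ n ih =>
      rw [Nat.count_succ]
      by_cases hz : pos n = z.1
      · have hzz : (⟨pos n, hnotT n⟩ : S.V0) = z := Subtype.ext hz
        rw [(hstep n).2, hzz, Function.update_self, ih]
        simp [hz, Function.iterate_succ_apply']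
      · have hzz : z ≠ (⟨pos n, hnotT n⟩ : S.V0) := fun h => hz (by rw [h])
        rw [(hstep n).2, Function.update_of_ne hzz, ih]
        simp [hz]
  -- infinitely visited vertices propagate along arcs
  have propagate : ∀ (z b : V), {n | pos n = z}.Infinite →
      (∃ e : E, S.src e = z ∧ S.head e = b) → {n | pos n = b}.Infinite := by
    intro z b hinf ⟨e, hsrc, hhead⟩
    obtain ⟨n₀, hn₀⟩ := hinf.nonempty
    have hzT : z ∉ S.T := hn₀ ▸ hnotT n₀
    set z' : S.V0 := ⟨z, hzT⟩ with hz'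
    set p : ℕ → Prop := fun n => pos n = z with hpdef
    have hsrcz : S.src e = S.src (ρ.1 z') := by rw [hsrc, ρ.2 z']
    -- at the k-th visit, the arc used is next^[k+1] (ρ.1 z')
    have harc : ∀ k : ℕ, pos (Nat.nth p k + 1) = S.head (S.next^[k + 1] (ρ.1 z')) := by
      intro k
      have hmem : p (Nat.nth p k) := Nat.nth_mem_of_infinite hinf k
      have hcnt : Nat.count p (Nat.nth p k) = k := Nat.count_nth_of_infinite hinf k
      have h1 := (hstep (Nat.nth p k)).1
      have hzz : (⟨pos (Nat.nth p k), hnotT _⟩ : S.V0) = z' := Subtype.ext hmem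
      rw [h1, hzz, rotor_evol z' (Nat.nth p k)]
      have : Nat.count (fun i => pos i = z'.1) (Nat.nth p k) = k := hcnt
      rw [this, ← Function.iterate_succ_apply' S.next k]
    -- the set of k with next^[k+1] = e is infinite
    have hJ : {k : ℕ | S.next^[k + 1] (ρ.1 z') = e}.Infinite := by
      by_contra hfin
      rw [Set.not_infinite] at hfin
      obtain ⟨B, hB⟩ := hfin.bddAbove
      obtain ⟨k, hk, hke⟩ := S.next_iter_hits (ρ.1 z') e hsrcz (B + 2)
      have : k - 1 ∈ {k : ℕ | S.next^[k + 1] (ρ.1 z') = e} := by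
        have : k - 1 + 1 = k := by omega
        simp only [Set.mem_setOf_eq, this, hke]
      have := hB this
      omega
    have himg : ((fun k => Nat.nth p k + 1) '' {k : ℕ | S.next^[k + 1] (ρ.1 z') = e}).Infinite := by
      apply Set.Infinite.image ?_ hJ
      intro i _ j _ hij
      simp only at hij
      exact (Nat.nth_strictMono (p := p) hinf).injective (by omega)
    apply himg.mono
    rintro n ⟨k, hk, rfl⟩
    show pos (Nat.nth p k + 1) = b
    rw [harc k, hk, hhead]
  -- some vertex is visited infinitely often
  have ⟨z, hz⟩ : ∃ z : V, {n | pos n = z}.Infinite := by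
    by_contra hfin
    push_neg at hfin
    have : (Set.univ : Set ℕ).Finite := by
      have hcover : (Set.univ : Set ℕ) = ⋃ z : V, {n | pos n = z} := by
        ext n
        simp
      rw [hcover]
      exact Set.finite_iUnion hfin
    exact Set.infinite_univ this
  -- propagate along a path to the target set
  obtain ⟨t, ht⟩ := S.T_nonempty
  have hpath := S.strongly_connected z t
  have key : ∀ a b : V, Relation.ReflTransGen
      (fun a b => ∃ e : E, S.src e = a ∧ S.head e = b) a b →
      {n | pos n = a}.Infinite → {n | pos n = b}.Infinite := by
    intro a b h
    induction h with
    | refl => exact id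
    | tail _ hedge ih => exact fun ha => propagate _ _ (ih ha) hedge
  have hvt : {n | pos n = t}.Infinite := key z t hpath hz
  obtain ⟨n, hn⟩ := hvt.nonempty
  exact hnotT n (hn ▸ ht)

end RotorSystem
namespace RotorSystem

variable {V E : Type} [Fintype V] [DecidableEq V] [Fintype E] [DecidableEq E]
variable (S : RotorSystem V E)

/-! ### Characterization of routing operators via the firing system -/

lemma route_eq (x : V) (ρ : S.RConf) :
    ∃ n, S.route x ρ = S.step^[n] (x, ρ) ∧ (S.step^[n] (x, ρ)).1 ∈ S.T := by
  classical
  have h := S.exists_step_mem x ρ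
  refine ⟨Nat.find h, ?_, Nat.find_spec h⟩
  rw [route, dif_pos h]

lemma tgt_mem (x : V) (ρ : S.RConf) : S.tgt x ρ ∈ S.T := by
  obtain ⟨n, h1, h2⟩ := S.route_eq x ρ
  rw [tgt, h1]
  exact h2

lemma reaches_addAt (v : S.V0) (ρ : S.RConf) (m : V → ℕ) :
    S.ReachesR (fun y => m y + if y = v.1 then 1 else 0, ρ)
      (fun y => m y + if y = S.tgt v.1 ρ then 1 else 0, S.addAt v ρ) := by
  obtain ⟨n, h1, _⟩ := S.route_eq v.1 ρ
  have h2 : S.tgt v.1 ρ = (S.step^[n] (v.1, ρ)).1 := by rw [tgt, h1]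
  have h3 : S.addAt v ρ = (S.step^[n] (v.1, ρ)).2 := by rw [addAt, h1]
  rw [h2, h3]
  exact S.reaches_step_iter n v.1 ρ m

lemma reaches_congr {s s' t t' : (V → ℕ) × S.RConf} (hs : s = s') (ht : t = t')
    (h : S.ReachesR s' t') : S.ReachesR s t := hs ▸ ht ▸ h

lemma reaches_congr_fun {f f' g g' : V → ℕ} {ρ κ : S.RConf}
    (hf : ∀ y, f y = f' y) (hg : ∀ y, g y = g' y)
    (h : S.ReachesR (f', ρ) (g', κ)) : S.ReachesR (f, ρ) (g, κ) := by
  rw [show f = f' from funext hf, show g = g' from funext hg]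
  exact h

lemma reaches_addAt_iter (v : S.V0) (ρ : S.RConf) (m : V → ℕ) (k : ℕ) :
    ∃ a : V → ℕ, (∀ y, y ∉ S.T → a y = 0) ∧
      S.ReachesR (fun y => m y + k * (if y = v.1 then 1 else 0), ρ)
        (fun y => m y + a y, (S.addAt v)^[k] ρ) := by
  induction k generalizing ρ m with
  | zero =>
    refine ⟨fun _ => 0, fun _ _ => rfl, ?_⟩
    exact S.reaches_congr_fun (fun y => by simp) (fun y => by simp)
      (Relation.ReflTransGen.refl (a := (m, ρ)))
  | succ k ih =>
    obtain ⟨a, ha, h2⟩ := ih (S.addAt v ρ) (fun z => m z + (if z = S.tgt v.1 ρ then 1 else 0))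
    refine ⟨fun z => a z + (if z = S.tgt v.1 ρ then 1 else 0), ?_, ?_⟩
    · intro y hy
      have h4 : y ≠ S.tgt v.1 ρ := fun h => hy (h ▸ S.tgt_mem v.1 ρ)
      simp [ha y hy, h4]
    · rw [Function.iterate_succ_apply]
      have h1 : S.ReachesR (fun y => m y + (k + 1) * (if y = v.1 then 1 else 0), ρ)
          (fun y => (m y + (if y = S.tgt v.1 ρ then 1 else 0))
              + k * (if y = v.1 then 1 else 0), S.addAt v ρ) :=
        S.reaches_congr_fun (fun y => by first | (dsimp only; split_ifs <;> omega) | (split_ifs <;> omega)) (fun y => by first | (dsimp only; split_ifs <;> omega) | (split_ifs <;> omega))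
          (S.reaches_addAt v ρ (fun z => m z + k * (if z = v.1 then 1 else 0)))
      refine Relation.ReflTransGen.trans h1
        (S.reaches_congr_fun (fun y => rfl) (fun y => by first | (dsimp only; split_ifs <;> omega) | (split_ifs <;> omega)) h2)

lemma reaches_foldr (l : List S.V0) (σ : S.PConf) (ρ : S.RConf) (m : V → ℕ) :
    ∃ a : V → ℕ, (∀ y, y ∉ S.T → a y = 0) ∧
      S.ReachesR (fun y => m y + (l.map fun v => σ v * (if y = v.1 then 1 else 0)).sum, ρ)
        (fun y => m y + a y, l.foldr (fun v r => (S.addAt v)^[σ v] r) ρ) := by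
  induction l generalizing m with
  | nil =>
    refine ⟨fun _ => 0, fun _ _ => rfl, ?_⟩
    exact S.reaches_congr_fun (fun y => by simp) (fun y => by simp)
      (Relation.ReflTransGen.refl (a := (m, ρ)))
  | cons v tl ih =>
    obtain ⟨a₁, ha₁, h1⟩ := ih (fun z => m z + σ v * (if z = v.1 then 1 else 0))
    obtain ⟨a₂, ha₂, h2⟩ := S.reaches_addAt_iter v
      (tl.foldr (fun v r => (S.addAt v)^[σ v] r) ρ) (fun z => m z + a₁ z) (σ v)
    refine ⟨fun z => a₁ z + a₂ z, fun y hy => by simp [ha₁ y hy, ha₂ y hy], ?_⟩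
    rw [List.foldr_cons]
    refine Relation.ReflTransGen.trans
      (S.reaches_congr_fun (fun y => ?_) (fun y => rfl) h1)
      (S.reaches_congr_fun (fun y => by first | (dsimp only; omega) | omega) (fun y => by first | (dsimp only; omega) | omega) h2)
    simp only [List.map_cons, List.sum_cons]
    omega

/-- extension of a particle configuration to all of `V`. -/
noncomputable def extC (σ : S.PConf) : V → ℕ :=
  fun x => if h : x ∈ S.T then 0 else σ ⟨x, h⟩

lemma extC_eq_sum (σ : S.PConf) (y : V) :
    S.extC σ y = ((Finset.univ : Finset S.V0).toList.map
      fun v => σ v * (if y = v.1 then 1 else 0)).sum := by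
  classical
  rw [Finset.sum_map_toList]
  by_cases hy : y ∈ S.T
  · rw [extC, dif_pos hy]
    rw [Finset.sum_eq_zero]
    intro v _
    have : y ≠ v.1 := fun h => v.2 (h ▸ hy)
    simp [this]
  · rw [extC, dif_neg hy]
    rw [Finset.sum_eq_single (⟨y, hy⟩ : S.V0)]
    · simp
    · intro b _ hb
      have : y ≠ b.1 := fun h => hb (Subtype.ext h.symm)
      simp [this]
    · simp

lemma reaches_act (σ : S.PConf) (ρ : S.RConf) (m : V → ℕ) :
    ∃ a : V → ℕ, (∀ y, y ∉ S.T → a y = 0) ∧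
      S.ReachesR (fun y => m y + S.extC σ y, ρ) (fun y => m y + a y, S.act σ ρ) := by
  obtain ⟨a, ha, h⟩ := S.reaches_foldr (Finset.univ : Finset S.V0).toList σ ρ m
  refine ⟨a, ha, S.reaches_congr_fun (fun y => by rw [S.extC_eq_sum σ y]) (fun _ => rfl) h⟩

lemma stable_of_supp_T {a : V → ℕ} (ha : ∀ y, y ∉ S.T → a y = 0) (κ : S.RConf) :
    S.StableS (a, κ) := fun v => ha v.1 v.2

lemma act_eq_of_reaches {σ : S.PConf} {ρ : S.RConf} {s : (V → ℕ) × S.RConf}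
    (h : S.ReachesR (S.extC σ, ρ) s) (hs : S.StableS s) : s.2 = S.act σ ρ := by
  obtain ⟨a, ha, h2⟩ := S.reaches_act σ ρ (fun _ => 0)
  have h2' : S.ReachesR (S.extC σ, ρ) (a, S.act σ ρ) :=
    S.reaches_congr_fun (fun y => by simp) (fun y => by simp) h2
  have := S.reaches_unique h hs h2' (S.stable_of_supp_T ha _)
  rw [this]

lemma act_add (σ τ : S.PConf) (ρ : S.RConf) : S.act (σ + τ) ρ = S.act τ (S.act σ ρ) := by
  obtain ⟨a₁, ha₁, h1⟩ := S.reaches_act σ ρ (S.extC τ)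
  obtain ⟨a₂, ha₂, h2⟩ := S.reaches_act τ (S.act σ ρ) a₁
  have hreach : S.ReachesR (S.extC (σ + τ), ρ)
      (fun y => a₁ y + a₂ y, S.act τ (S.act σ ρ)) := by
    refine Relation.ReflTransGen.trans
      (S.reaches_congr_fun (fun y => ?_) (fun y => rfl) h1)
      (S.reaches_congr_fun (fun y => by first | (dsimp only; omega) | omega) (fun y => by first | (dsimp only; omega) | omega) h2)
    rw [extC, extC, extC]
    split <;> simp [Pi.add_apply, Nat.add_comm]
  exact (S.act_eq_of_reaches hreach
    (S.stable_of_supp_T (fun y hy => by simp [ha₁ y hy, ha₂ y hy]) _)).symm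

end RotorSystem
namespace RotorSystem

variable {V E : Type} [Fintype V] [DecidableEq V] [Fintype E] [DecidableEq E]
variable (S : RotorSystem V E)

/-! ### Full rotor rotation realizes a toppling -/

lemma partial_rotation (v : S.V0) (ρ : S.RConf) (m : V → ℕ) (j : ℕ)
    (hj : j ≤ S.outdeg v.1) :
    S.ReachesR (fun y => m y + S.outdeg v.1 * (if y = v.1 then 1 else 0), ρ)
      (fun y => (m y + (S.outdeg v.1 - j) * (if y = v.1 then 1 else 0)) +
          ∑ i ∈ Finset.range j, (if y = S.head (S.next^[i + 1] (ρ.1 v)) then 1 else 0),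
        ⟨Function.update ρ.1 v (S.next^[j] (ρ.1 v)), by
          intro w
          rcases eq_or_ne w v with rfl | hw
          · rw [Function.update_self, S.next_iter_src]; exact ρ.2 w
          · rw [Function.update_of_ne hw]; exact ρ.2 w⟩) := by
  induction j with
  | zero =>
    refine S.reaches_congr rfl ?_ Relation.ReflTransGen.refl
    refine Prod.ext ?_ ?_
    · funext y
      simp
    · apply Subtype.ext
      simp only []
      rw [Function.iterate_zero, id, Function.update_eq_self]
  | succ j ih =>
    refine Relation.ReflTransGen.tail (ih (by omega)) ⟨v, ?_, ?_⟩
    · simp only [eq_self_iff_true, if_true, Nat.mul_one]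
      omega
    · refine Prod.ext ?_ ?_
      · funext y
        simp only [fireAt, Function.update_self]
        rw [Finset.sum_range_succ]
        rw [← Function.iterate_succ_apply' S.next j]
        rcases eq_or_ne y v.1 with rfl | hy
        · simp only [if_pos rfl]
          split_ifs <;> omega
        · simp only [if_neg hy]
          split_ifs <;> omega
      · apply Subtype.ext
        simp only [fireAt, Function.update_self]
        rw [Function.update_idem]
        rw [← Function.iterate_succ_apply' S.next j]

lemma sum_indicator_eq_numArcs (v : S.V0) (ρ : S.RConf) (y : V) :
    (∑ i ∈ Finset.range (S.outdeg v.1),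
      (if y = S.head (S.next^[i + 1] (ρ.1 v)) then 1 else 0)) = S.numArcs v.1 y := by
  classical
  have hsrc1 : S.src (S.next (ρ.1 v)) = v.1 := by rw [S.next_src, ρ.2 v]
  have himg := (S.orbit_facts (S.next (ρ.1 v))).2
  rw [hsrc1] at himg
  have hinj : Set.InjOn (fun k => S.next^[k] (S.next (ρ.1 v)))
      (Finset.range (S.outdeg v.1)) := by
    intro i hi j hj hEq
    simp only [Finset.coe_range, Set.mem_Iio] at hi hj
    by_contra hne
    have key : ∀ i j : ℕ, i < j → j < S.outdeg v.1 →
        S.next^[i] (S.next (ρ.1 v)) = S.next^[j] (S.next (ρ.1 v)) → False := by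
      intro i j hlt hjd hEq
      have hper := S.period_of_collide _ hlt hEq
      -- the orbit image would have fewer than outdeg elements
      have hsub : Finset.univ.filter (fun e => S.src e = v.1) ⊆
          (Finset.range j).image (fun k => S.next^[k] (S.next (ρ.1 v))) := by
        intro e he
        rw [← himg] at he
        simp only [Finset.mem_image, Finset.mem_range] at he ⊢
        obtain ⟨k, hk, rfl⟩ := he
        have hmod := Nat.mod_lt k (show 0 < j - i by omega)
        refine ⟨k % (j - i), by omega, ?_⟩
        rw [← S.iterate_mod _ (show 0 < j - i by omega) hper k]
      have hcard := Finset.card_le_card hsub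
      have h2 := Finset.card_image_le (s := Finset.range j)
        (f := fun k => S.next^[k] (S.next (ρ.1 v)))
      rw [Finset.card_range] at h2
      have h3 : (Finset.univ.filter (fun e => S.src e = v.1)).card = S.outdeg v.1 := rfl
      omega
    rcases Nat.lt_or_ge i j with hlt | hge
    · exact key i j hlt hj hEq
    · exact key j i (by omega) hi hEq.symm
  have hshift : ∀ i : ℕ, S.next^[i + 1] (ρ.1 v) = S.next^[i] (S.next (ρ.1 v)) := by
    intro i
    rw [Function.iterate_succ_apply]
  calc (∑ i ∈ Finset.range (S.outdeg v.1),
        (if y = S.head (S.next^[i + 1] (ρ.1 v)) then 1 else 0))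
      = ∑ i ∈ Finset.range (S.outdeg v.1),
        (if y = S.head (S.next^[i] (S.next (ρ.1 v))) then 1 else 0) := by
        refine Finset.sum_congr rfl fun i _ => by rw [hshift]
    _ = ∑ e ∈ (Finset.range (S.outdeg v.1)).image (fun k => S.next^[k] (S.next (ρ.1 v))),
        (if y = S.head e then 1 else 0) :=
        (Finset.sum_image (g := fun k => S.next^[k] (S.next (ρ.1 v)))
          (f := fun e => if y = S.head e then 1 else 0)
          (fun i hi j hj h => hinj hi hj h)).symm
    _ = ∑ e ∈ Finset.univ.filter (fun e => S.src e = v.1),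
        (if y = S.head e then 1 else 0) := by rw [himg]
    _ = S.numArcs v.1 y := by
        rw [numArcs, Finset.card_filter, Finset.sum_filter]
        refine Finset.sum_congr rfl fun e _ => ?_
        rcases eq_or_ne (S.src e) v.1 with h1 | h1 <;>
          rcases eq_or_ne y (S.head e) with h2 | h2
        · rw [if_pos h1, if_pos h2, if_pos ⟨h1, h2.symm⟩]
        · rw [if_pos h1, if_neg h2, if_neg (fun hc => h2 hc.2.symm)]
        · rw [if_neg h1, if_neg (fun hc => h1 hc.1)]
        · rw [if_neg h1, if_neg (fun hc => h1 hc.1)]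

lemma full_rotation (v : S.V0) (ρ : S.RConf) (m : V → ℕ) :
    S.ReachesR (fun y => m y + S.outdeg v.1 * (if y = v.1 then 1 else 0), ρ)
      (fun y => m y + S.numArcs v.1 y, ρ) := by
  have h := S.partial_rotation v ρ m (S.outdeg v.1) le_rfl
  have hper : S.next^[S.outdeg v.1] (ρ.1 v) = ρ.1 v := by
    have := S.next_iter_outdeg (ρ.1 v)
    rw [ρ.2 v] at this
    exact this
  refine S.reaches_congr rfl ?_ h
  refine Prod.ext ?_ ?_
  · funext y
    simp only []
    rw [S.sum_indicator_eq_numArcs v ρ y]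
    simp
  · apply Subtype.ext
    simp only []
    rw [hper, Function.update_eq_self]

end RotorSystem
namespace RotorSystem

variable {V E : Type} [Fintype V] [DecidableEq V] [Fintype E] [DecidableEq E]
variable (S : RotorSystem V E)

lemma reaches_batch (W : Finset S.V0) (ρ : S.RConf) (m : V → ℕ) :
    S.ReachesR (fun y => m y + ∑ v ∈ W, S.outdeg v.1 * (if y = v.1 then 1 else 0), ρ)
      (fun y => m y + ∑ v ∈ W, S.numArcs v.1 y, ρ) := by
  classical
  induction W using Finset.induction_on generalizing m with
  | empty =>
    have h0 : (fun y => m y + ∑ v ∈ (∅ : Finset S.V0), S.outdeg v.1 * (if y = v.1 then 1 else 0))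
        = fun y => m y + ∑ v ∈ (∅ : Finset S.V0), S.numArcs v.1 y := by
      funext y
      simp
    rw [h0]
    exact Relation.ReflTransGen.refl
  | insert a W ha ih =>
    have h1 := S.full_rotation a ρ
      (fun z => m z + ∑ v ∈ W, S.outdeg v.1 * (if z = v.1 then 1 else 0))
    have h2 := ih (fun z => m z + S.numArcs a.1 z)
    refine Relation.ReflTransGen.trans
      (S.reaches_congr_fun (fun y => ?_) (fun y => rfl) h1)
      (S.reaches_congr_fun (fun y => by omega) (fun y => ?_) h2)
    · rw [Finset.sum_insert ha]
      omega
    · rw [Finset.sum_insert ha]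
      omega

lemma act_toppleStep (σ : S.PConf) (ρ : S.RConf) :
    S.act (S.toppleStep σ) ρ = S.act σ ρ := by
  classical
  set U : Finset S.V0 := Finset.univ.filter (fun v : S.V0 => S.outdeg v.1 ≤ σ v) with hU
  set m₀ : V → ℕ := fun y =>
    if h : y ∈ S.T then 0
    else (if S.outdeg y ≤ σ ⟨y, h⟩ then σ ⟨y, h⟩ - S.outdeg y else σ ⟨y, h⟩) with hm₀
  set junk : V → ℕ := fun y => if y ∈ S.T then ∑ v ∈ U, S.numArcs v.1 y else 0 with hjunk
  have hsum_ite : ∀ (y : V) (hy : y ∉ S.T),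
      (∑ v ∈ U, S.outdeg v.1 * (if y = v.1 then 1 else 0)) =
        if (⟨y, hy⟩ : S.V0) ∈ U then S.outdeg y else 0 := by
    intro y hy
    rw [show (∑ v ∈ U, S.outdeg v.1 * (if y = v.1 then 1 else 0)) =
        ∑ v ∈ U, (if v = (⟨y, hy⟩ : S.V0) then S.outdeg v.1 else 0) from
      Finset.sum_congr rfl fun v _ => by
        rcases eq_or_ne v (⟨y, hy⟩ : S.V0) with rfl | hv
        · simp
        · have : y ≠ v.1 := fun h => hv (Subtype.ext h.symm)
          simp [this, hv]]
    rw [Finset.sum_ite_eq' U (⟨y, hy⟩ : S.V0) (fun v => S.outdeg v.1)]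
  have h_start : ∀ y, S.extC σ y =
      m₀ y + ∑ v ∈ U, S.outdeg v.1 * (if y = v.1 then 1 else 0) := by
    intro y
    by_cases hy : y ∈ S.T
    · have hz : (∑ v ∈ U, S.outdeg v.1 * (if y = v.1 then 1 else 0)) = 0 :=
        Finset.sum_eq_zero fun v _ => by
          have : y ≠ v.1 := fun h => v.2 (h ▸ hy)
          simp [this]
      rw [extC, dif_pos hy, hz, hm₀]
      simp [dif_pos hy]
    · rw [extC, dif_neg hy, hsum_ite y hy, hm₀]
      simp only [dif_neg hy]
      have hmem : ((⟨y, hy⟩ : S.V0) ∈ U) ↔ S.outdeg y ≤ σ ⟨y, hy⟩ := by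
        rw [hU, Finset.mem_filter]
        simp
      by_cases hc : S.outdeg y ≤ σ ⟨y, hy⟩
      · rw [if_pos hc, if_pos (hmem.mpr hc)]
        omega
      · rw [if_neg hc, if_neg (fun h => hc (hmem.mp h))]
        omega
  have h_mid : ∀ y, m₀ y + ∑ v ∈ U, S.numArcs v.1 y =
      S.extC (S.toppleStep σ) y + junk y := by
    intro y
    by_cases hy : y ∈ S.T
    · rw [hm₀, hjunk, extC, dif_pos hy]
      simp only [dif_pos hy, if_pos hy]
      try omega
    · rw [hm₀, hjunk, extC, dif_neg hy]
      simp only [dif_neg hy, if_neg hy]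
      rw [toppleStep]
      have hcoe : ((⟨y, hy⟩ : S.V0) : V) = y := rfl
      simp only [hcoe]
      have hs : (∑ v ∈ U, S.numArcs v.1 y) =
          ∑ w : S.V0, (if S.outdeg w.1 ≤ σ w then S.numArcs w.1 y else 0) := by
        rw [hU, Finset.sum_filter]
      omega
  have hreach : S.ReachesR (S.extC σ, ρ)
      (fun y => junk y + S.extC (S.toppleStep σ) y, ρ) := by
    refine Relation.ReflTransGen.trans
      (S.reaches_congr_fun (fun y => h_start y) (fun y => rfl) (S.reaches_batch U ρ m₀))
      (S.reaches_congr_fun (fun y => by rw [h_mid y]; omega) (fun y => rfl)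
        (Relation.ReflTransGen.refl))
  obtain ⟨a, ha, h2⟩ := S.reaches_act (S.toppleStep σ) ρ junk
  have htot : S.ReachesR (S.extC σ, ρ) (fun y => junk y + a y, S.act (S.toppleStep σ) ρ) :=
    Relation.ReflTransGen.trans hreach h2
  have hjsupp : ∀ y, y ∉ S.T → junk y = 0 := by
    intro y hy
    rw [hjunk]
    simp [hy]
  exact S.act_eq_of_reaches htot
    (S.stable_of_supp_T (fun y hy => by simp [hjsupp y hy, ha y hy]) _)

lemma act_iterate_topple (n : ℕ) (σ : S.PConf) (ρ : S.RConf) :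
    S.act (S.toppleStep^[n] σ) ρ = S.act σ ρ := by
  induction n generalizing σ with
  | zero => rfl
  | succ n ih => rw [Function.iterate_succ_apply, ih, S.act_toppleStep]

lemma act_stabilize (σ : S.PConf) (ρ : S.RConf) :
    S.act (S.stabilize σ) ρ = S.act σ ρ := by
  unfold stabilize
  split
  · exact S.act_iterate_topple _ σ ρ
  · rfl

end RotorSystem
/-- **Lemma (characterizations of equivalence of rotor configurations).**
For rotor configurations `ρ, ρ'` the following are equivalent:
(a) `σρ = σρ'` for some particle configuration `σ`;
(b) `σρ = σρ'` for every recurrent configuration `σ ∈ S(G/T)`;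
(c) `eρ = eρ'`, where `e` is the identity element of the sandpile group `S(G/T)`;
(d) `σρ = σρ'` for every particle configuration `σ ≥ e`. -/
theorem requiv_tfae {V E : Type} [Fintype V] [DecidableEq V] [Fintype E]
    [DecidableEq E] (S : RotorSystem V E)
    (e : S.PConf) (he : S.IsSandpileIdentity e) (ρ ρ' : S.RConf) :
    List.TFAE
      [∃ σ : S.PConf, S.act σ ρ = S.act σ ρ',
       ∀ σ : S.PConf, S.IsRecurrent σ → S.act σ ρ = S.act σ ρ',
       S.act e ρ = S.act e ρ',
       ∀ σ : S.PConf, (∀ v : S.V0, e v ≤ σ v) → S.act σ ρ = S.act σ ρ'] := by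
  tfae_have 1 → 3 := by
    rintro ⟨σ, h⟩
    obtain ⟨τ', hτ'⟩ := he.1.2 σ
    have key : ∀ ρ₀ : S.RConf, S.act e ρ₀ = S.act τ' (S.act σ ρ₀) := by
      intro ρ₀
      rw [hτ', S.act_stabilize, show τ' + σ = σ + τ' from add_comm τ' σ, S.act_add]
    rw [key ρ, key ρ', h]
  tfae_have 3 → 2 := by
    intro h σ hσ
    have h2 := he.2 σ hσ
    have key : ∀ ρ₀ : S.RConf, S.act σ ρ₀ = S.act σ (S.act e ρ₀) := by
      intro ρ₀
      conv_lhs => rw [← h2, S.act_stabilize, S.act_add]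
    rw [key ρ, key ρ', h]
  tfae_have 2 → 3 := fun h => h e he.1
  tfae_have 3 → 4 := by
    intro h σ hσ
    have hστ : σ = e + (fun v => σ v - e v) := by
      funext v
      have := hσ v
      simp only [Pi.add_apply]
      omega
    rw [hστ, S.act_add, S.act_add, h]
  tfae_have 4 → 1 := fun h => ⟨e, h e fun v => le_rfl⟩
  tfae_finish
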